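/- Let $k[G]$ be a finite separable field extension of a field $k$, let $R$ be a commutative $k$-algebra, and let $\phi: k[G] \to R((\varpi))$ be a $k$-algebra homomorphism. Then for every $f \in k[G]$, the image $\phi(f)$ lies in $R[[\varpi]]$. -/

import Mathlib

open Polynomial HahnSeries

namespace LaurentAux

variable {R : Type*} [CommRing R]

lemma coeff_sum {α : Type*} (s : Finset α) (f : α → LaurentSeries R) (n : ℤ) :
    (∑ i ∈ s, f i).coeff n = ∑ i ∈ s, (f i).coeff n :=
  map_sum (coeff.addMonoidHom n) f s

/-- Coefficients of powers below `i • n1` vanish modulo the ideal spanned by low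
coefficients. -/
lemma pow_coeff_mem {J : Ideal R} {x : LaurentSeries R} {n1 : ℤ}
    (hx : ∀ m < n1, x.coeff m ∈ J) (hn1 : n1 ≤ 0) :
    ∀ i : ℕ, ∀ m : ℤ, m < (i : ℤ) * n1 → (x ^ i).coeff m ∈ J := by
  intro i
  induction i with
  | zero =>
    intro m hm
    simp only [Nat.cast_zero, zero_mul] at hm
    rw [pow_zero, HahnSeries.coeff_one, if_neg hm.ne]
    exact J.zero_mem
  | succ i ih =>
    intro m hm
    rw [pow_succ, HahnSeries.coeff_mul]
    apply Ideal.sum_mem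
    intro ij hij
    rw [Finset.mem_addAntidiagonal] at hij
    rcases lt_or_ge ij.2 n1 with h | h
    · exact J.mul_mem_left _ (hx _ h)
    · have hcast : ((i : ℤ) + 1) * n1 = (i : ℤ) * n1 + n1 := by ring
      have h1 : ij.1 < (i : ℤ) * n1 := by
        have := hij.2.2
        push_cast at hm
        omega
      exact J.mul_mem_right _ (ih _ h1)

lemma pow_coeff_sub_pow_mem {J : Ideal R} {x : LaurentSeries R} {n1 : ℤ}
    (hx : ∀ m < n1, x.coeff m ∈ J) (hn1 : n1 ≤ 0) :
    ∀ i : ℕ, (x ^ i).coeff ((i : ℤ) * n1) - (x.coeff n1) ^ i ∈ J := by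
  intro i
  induction i with
  | zero =>
    simp only [Nat.cast_zero, zero_mul, pow_zero, HahnSeries.coeff_one, if_pos rfl]
    simpa using J.zero_mem
  | succ i ih =>
    rw [pow_succ, HahnSeries.coeff_mul]
    set s := Finset.antidiagonal (x ^ i).isPWO_support x.isPWO_support (((i : ℕ) + 1 : ℕ) * n1)
      with hs
    set q : ℤ × ℤ := ((i : ℤ) * n1, n1) with hqdef
    have hterm : ∀ ij ∈ s, ij ≠ q → (x ^ i).coeff ij.1 * x.coeff ij.2 ∈ J := by
      intro ij hij hne
      rw [hs, Finset.mem_addAntidiagonal] at hij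
      rcases lt_or_ge ij.2 n1 with h | h
      · exact J.mul_mem_left _ (hx _ h)
      · rcases lt_or_ge ij.1 ((i : ℤ) * n1) with h' | h'
        · exact J.mul_mem_right _ (pow_coeff_mem hx hn1 i _ h')
        · exfalso
          apply hne
          have hsum := hij.2.2
          push_cast at hsum
          have e : ((i : ℤ) + 1) * n1 = (i : ℤ) * n1 + n1 := by ring
          have h2 : ij.2 = n1 := by omega
          have h1 : ij.1 = (i : ℤ) * n1 := by omega
          rw [hqdef, Prod.ext_iff]
          exact ⟨h1, h2⟩
    have hmain : (∑ ij ∈ s, (x ^ i).coeff ij.1 * x.coeff ij.2)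
        - (x ^ i).coeff ((i : ℤ) * n1) * x.coeff n1 ∈ J := by
      by_cases hqs : q ∈ s
      · rw [← Finset.sum_erase_add s _ hqs]
        have : (x ^ i).coeff q.1 * x.coeff q.2
            = (x ^ i).coeff ((i : ℤ) * n1) * x.coeff n1 := by rw [hqdef]
        rw [this]
        simp only [add_sub_cancel_right]
        exact Ideal.sum_mem _ fun ij hij =>
          hterm ij (Finset.mem_of_mem_erase hij) (Finset.ne_of_mem_erase hij)
      · have hz : (x ^ i).coeff ((i : ℤ) * n1) * x.coeff n1 = 0 := by
          rw [hs, Finset.mem_addAntidiagonal] at hqs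
          push_neg at hqs
          by_cases h1 : (x ^ i).coeff ((i : ℤ) * n1) = 0
          · rw [h1, zero_mul]
          · by_cases h2 : x.coeff n1 = 0
            · rw [h2, mul_zero]
            · exfalso
              apply hqs (HahnSeries.mem_support _ _ |>.mpr h1) (HahnSeries.mem_support _ _ |>.mpr h2)
              show (i : ℤ) * n1 + n1 = _
              push_cast
              ring
        rw [hz, sub_zero]
        exact Ideal.sum_mem _ fun ij hij => hterm ij hij (fun h => hqs (h ▸ hij))
    have hlast : ((x ^ i).coeff ((i : ℤ) * n1) - (x.coeff n1) ^ i) * x.coeff n1 ∈ J :=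
      J.mul_mem_right _ ih
    have heq : (∑ ij ∈ s, (x ^ i).coeff ij.1 * x.coeff ij.2) - x.coeff n1 ^ (i + 1)
        = ((∑ ij ∈ s, (x ^ i).coeff ij.1 * x.coeff ij.2)
            - (x ^ i).coeff ((i : ℤ) * n1) * x.coeff n1)
          + ((x ^ i).coeff ((i : ℤ) * n1) - (x.coeff n1) ^ i) * x.coeff n1 := by ring
    rw [heq]
    exact J.add_mem hmain hlast

end LaurentAux

namespace LaurentAux

variable {R : Type*} [CommRing R]

lemma algebraMap_mul_coeff (r : R) (w : LaurentSeries R) (n : ℤ) :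
    (algebraMap R (LaurentSeries R) r * w).coeff n = r * w.coeff n := by
  rw [HahnSeries.algebraMap_apply',
    show (algebraMap R (PowerSeries R)) r = PowerSeries.C r by
      simp [PowerSeries.algebraMap_apply],
    HahnSeries.ofPowerSeries_C, HahnSeries.C_apply]
  exact HahnSeries.coeff_single_zero_mul

lemma coeff_finset_sum {α : Type*} (s : Finset α) (f : α → LaurentSeries R) (n : ℤ) :
    (∑ i ∈ s, f i).coeff n = ∑ i ∈ s, (f i).coeff n :=
  map_sum (coeff.addMonoidHom n) f s

/-- Every negative coefficient of a Laurent series which is a root of a monic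
polynomial with constant coefficients is nilpotent. -/
lemma coeff_nilpotent (x : LaurentSeries R) (p : R[X]) (hmo : p.Monic)
    (h0 : aeval x p = 0) : ∀ n < 0, IsNilpotent (x.coeff n) := by
  classical
  set q : Polynomial (LaurentSeries R) := p.map (algebraMap R (LaurentSeries R)) with hqdef
  have hq0 : q.eval x = 0 := by
    rw [hqdef, Polynomial.eval_map, ← Polynomial.aeval_def, h0]
  set d := p.natDegree with hd
  have hqd : q.natDegree < d + 1 := by
    have : q.natDegree ≤ p.natDegree := Polynomial.natDegree_map_le
    omega
  -- degenerate case : degree 0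
  rcases Nat.eq_zero_or_pos d with hd0 | hd0
  · have hp1 : p = 1 := (Polynomial.Monic.natDegree_eq_zero hmo).mp hd0
    have : (1 : LaurentSeries R) = 0 := by
      rw [hp1] at h0; simpa using h0
    have h10 : (1 : R) = 0 := by
      have := congrArg (fun w : LaurentSeries R => w.coeff 0) this
      simpa using this
    intro n _
    exact ⟨1, by rw [pow_one, ← mul_one (x.coeff n), h10, mul_zero]⟩
  -- lower bound for the support
  obtain ⟨o, ho⟩ : ∃ o : ℤ, ∀ m < o, x.coeff m = 0 := by
    by_cases hx : x = 0
    · exact ⟨0, fun m _ => by simp [hx]⟩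
    · exact ⟨x.order, fun m hm => by
        by_contra h
        exact absurd (HahnSeries.order_le_of_coeff_ne_zero h) (not_le.mpr hm)⟩
  have key : ∀ t : ℕ, ∀ n1 : ℤ, n1 < 0 → n1 - o < t → IsNilpotent (x.coeff n1) := by
    intro t
    induction t using Nat.strong_induction_on with
    | _ t ih =>
      intro n1 hn1 hto
      rcases lt_or_ge n1 o with hno | hno
      · rw [ho n1 hno]; exact IsNilpotent.zero
      have ht1 : 1 ≤ t := by omega
      set J : Ideal R := Ideal.span (x.coeff '' Set.Iio n1) with hJ
      have hJnil : J ≤ nilradical R := by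
        rw [hJ, Ideal.span_le]
        rintro s ⟨m, hm', rfl⟩
        rcases lt_or_ge m o with h | h
        · rw [ho m h]; exact (nilradical R).zero_mem
        · have hmem : IsNilpotent (x.coeff m) := by
            refine ih (t - 1) (by omega) m (by simp at hm'; omega) (by simp at hm'; omega)
          exact mem_nilradical.mpr hmem
      have hxJ : ∀ m < n1, x.coeff m ∈ J := fun m hm' =>
        Ideal.subset_span ⟨m, hm', rfl⟩
      -- compute the coefficient of `q.eval x` in degree `d * n1`
      have hsum : (q.eval x).coeff ((d : ℤ) * n1) = 0 := by rw [hq0]; simp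
      rw [Polynomial.eval_eq_sum_range' hqd] at hsum
      rw [coeff_finset_sum] at hsum
      have hterm : ∀ i : ℕ, (q.coeff i * x ^ i).coeff ((d : ℤ) * n1)
          = p.coeff i * (x ^ i).coeff ((d : ℤ) * n1) := by
        intro i
        rw [hqdef, Polynomial.coeff_map, algebraMap_mul_coeff]
      rw [Finset.sum_congr rfl fun i _ => hterm i, Finset.sum_range_succ] at hsum
      have hlow : ∀ i : ℕ, i < d → p.coeff i * (x ^ i).coeff ((d : ℤ) * n1) ∈ J := by
        intro i hi
        refine J.mul_mem_left _ (pow_coeff_mem hxJ hn1.le i _ ?_)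
        have : (d : ℤ) * n1 < (i : ℤ) * n1 := by
          apply mul_lt_mul_of_neg_right _ hn1
          exact_mod_cast hi
        exact this
      have hsum2 : (∑ i ∈ Finset.range d, p.coeff i * (x ^ i).coeff ((d : ℤ) * n1)) ∈ J :=
        Ideal.sum_mem _ fun i hi => hlow i (Finset.mem_range.mp hi)
      have hdcoeff : p.coeff d = 1 := hmo.coeff_natDegree
      have hKC2 : (x ^ d).coeff ((d : ℤ) * n1) - (x.coeff n1) ^ d ∈ J :=
        pow_coeff_sub_pow_mem hxJ hn1.le d
      have hpowJ : (x.coeff n1) ^ d ∈ J := by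
        have heq : (x.coeff n1) ^ d =
            -(∑ i ∈ Finset.range d, p.coeff i * (x ^ i).coeff ((d : ℤ) * n1))
            - ((x ^ d).coeff ((d : ℤ) * n1) - (x.coeff n1) ^ d)
            + ((∑ i ∈ Finset.range d, p.coeff i * (x ^ i).coeff ((d : ℤ) * n1))
              + p.coeff d * (x ^ d).coeff ((d : ℤ) * n1)) := by
          rw [hdcoeff]; ring
        rw [heq, hsum]
        rw [add_zero]
        exact J.sub_mem (J.neg_mem hsum2) hKC2
      have : IsNilpotent ((x.coeff n1) ^ d) := mem_nilradical.mp (hJnil hpowJ)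
      obtain ⟨m, hm'⟩ := this
      exact ⟨d * m, by rw [pow_mul]; exact hm'⟩
  intro n hn
  exact key (n - o + 1).toNat n hn (by omega)

end LaurentAux

namespace LaurentAux

variable {R : Type*} [CommRing R]

lemma coeff_ofPowerSeries_neg (p : PowerSeries R) {n : ℤ} (hn : n < 0) :
    (ofPowerSeries ℤ R p).coeff n = 0 := by
  rw [ofPowerSeries_apply]
  apply embDomain_notin_range
  rintro ⟨m, rfl⟩
  simp at hn
  omega

lemma exists_ofPowerSeries (x : LaurentSeries R) (h : ∀ n < 0, x.coeff n = 0) :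
    ∃ p : PowerSeries R, ofPowerSeries ℤ R p = x := by
  refine ⟨PowerSeries.mk fun m => x.coeff m, ?_⟩
  ext n
  rcases lt_or_ge n 0 with hn | hn
  · rw [coeff_ofPowerSeries_neg _ hn, h n hn]
  · lift n to ℕ using hn
    rw [ofPowerSeries_apply_coeff]
    simp

lemma coeff_mul_mem_left {J : Ideal R} {a b : LaurentSeries R}
    (hb : ∀ n, b.coeff n ∈ J) (n : ℤ) : (a * b).coeff n ∈ J := by
  rw [HahnSeries.coeff_mul]
  exact Ideal.sum_mem _ fun ij _ => J.mul_mem_left _ (hb _)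

lemma coeff_mul_mem_mul {J K : Ideal R} {a b : LaurentSeries R}
    (ha : ∀ n, a.coeff n ∈ J) (hb : ∀ n, b.coeff n ∈ K) (n : ℤ) :
    (a * b).coeff n ∈ J * K := by
  rw [HahnSeries.coeff_mul]
  exact Ideal.sum_mem _ fun ij _ => Ideal.mul_mem_mul (ha _) (hb _)

/-- The subalgebra of Laurent series with no negative coefficients. -/
def nonneg (R : Type*) [CommRing R] : Subalgebra R (LaurentSeries R) where
  carrier := {w | ∀ n < 0, w.coeff n = 0}
  add_mem' {a b} ha hb := by
    intro n hn
    rw [HahnSeries.coeff_add, ha n hn, hb n hn, add_zero]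
  mul_mem' {a b} ha hb := by
    intro n hn
    rw [HahnSeries.coeff_mul]
    apply Finset.sum_eq_zero
    intro ij hij
    rw [Finset.mem_addAntidiagonal] at hij
    rcases lt_or_ge ij.1 0 with h | h
    · rw [ha _ h, zero_mul]
    · have : ij.2 < 0 := by omega
      rw [hb _ this, mul_zero]
  one_mem' := by
    intro n hn
    rw [HahnSeries.coeff_one, if_neg hn.ne]
  zero_mem' := by intro n _; simp
  algebraMap_mem' r := by
    intro n hn
    have : (algebraMap R (LaurentSeries R) r * 1).coeff n = r * (1 : LaurentSeries R).coeff n :=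
      algebraMap_mul_coeff r 1 n
    rw [mul_one] at this
    rw [this, HahnSeries.coeff_one, if_neg hn.ne, mul_zero]

lemma eval_mem_nonneg {y : LaurentSeries R} (hy : ∀ n < 0, y.coeff n = 0) (p : R[X]) :
    ∀ n < 0, ((p.map (algebraMap R (LaurentSeries R))).eval y).coeff n = 0 := by
  have he : (p.map (algebraMap R (LaurentSeries R))).eval y = aeval y p := by
    rw [Polynomial.eval_map, ← Polynomial.aeval_def]
  rw [he]
  have h1 : aeval y p ∈ Algebra.adjoin R ({y} : Set (LaurentSeries R)) :=
    Polynomial.aeval_mem_adjoin_singleton R y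
  have h2 : Algebra.adjoin R ({y} : Set (LaurentSeries R)) ≤ nonneg R :=
    Algebra.adjoin_le (Set.singleton_subset_iff.mpr hy)
  exact h2 h1

/-- The key step: negative coefficients lie in the square of the ideal they generate,
thanks to separability. -/
lemma coeff_mem_sq (x : LaurentSeries R) (p c : R[X])
    (h0 : aeval x p = 0) (hu : aeval x c * aeval x (derivative p) = 1)
    (I : Ideal R) (hI : ∀ n < 0, x.coeff n ∈ I) :
    ∀ n < 0, x.coeff n ∈ I * I := by
  set y : LaurentSeries R := ofPowerSeries ℤ R (PowerSeries.mk fun m => x.coeff m) with hydef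
  have hyneg : ∀ n < 0, y.coeff n = 0 := fun n hn => coeff_ofPowerSeries_neg _ hn
  set z : LaurentSeries R := x - y with hzdef
  have hzc : ∀ n : ℤ, z.coeff n ∈ I := by
    intro n
    rw [hzdef, HahnSeries.coeff_sub]
    rcases lt_or_ge n 0 with h | h
    · rw [hyneg n h, sub_zero]; exact hI n h
    · have : y.coeff n = x.coeff n := by
        lift n to ℕ using h
        rw [hydef, ofPowerSeries_apply_coeff]
        simp
      rw [this, sub_self]; exact I.zero_mem
  have hxyz : x = y + z := by rw [hzdef]; ring
  set q : Polynomial (LaurentSeries R) := p.map (algebraMap R (LaurentSeries R)) with hqdef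
  set qc : Polynomial (LaurentSeries R) := c.map (algebraMap R (LaurentSeries R)) with hqcdef
  have hq0 : q.eval x = 0 := by
    rw [hqdef, Polynomial.eval_map, ← Polynomial.aeval_def, h0]
  set u : LaurentSeries R := q.derivative.eval x with hudef
  set v : LaurentSeries R := qc.eval x with hvdef
  have huv : v * u = 1 := by
    rw [hvdef, hudef, hqdef, hqcdef, Polynomial.derivative_map, Polynomial.eval_map,
      Polynomial.eval_map, ← Polynomial.aeval_def, ← Polynomial.aeval_def]
    exact hu
  obtain ⟨k₁, hk₁⟩ := Polynomial.binomExpansion q y z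
  obtain ⟨k₂, hk₂⟩ := Polynomial.binomExpansion q.derivative x (-z)
  obtain ⟨k₃, hk₃⟩ := Polynomial.binomExpansion qc x (-z)
  have hxz : x + -z = y := by rw [hzdef]; ring
  rw [hxz] at hk₂ hk₃
  rw [← hxyz, hq0] at hk₁
  -- w = u * z
  set w : LaurentSeries R := u * z with hwdef
  have hweq : w = -(q.eval y)
      - (((-(q.derivative.derivative.eval x)) + k₂ * z + k₁) * z) * z := by
    rw [hwdef]
    linear_combination (-1 : LaurentSeries R) * hk₁ - z * hk₂
  have hwI : ∀ n, w.coeff n ∈ I := by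
    intro n; rw [hwdef]; exact coeff_mul_mem_left hzc n
  have hGz : ∀ m, ((((-(q.derivative.derivative.eval x)) + k₂ * z + k₁) * z) * z).coeff m
      ∈ I * I :=
    coeff_mul_mem_mul (coeff_mul_mem_left hzc) hzc
  have hqy : ∀ n < 0, (q.eval y).coeff n = 0 := by
    rw [hqdef]; exact eval_mem_nonneg hyneg p
  have hwneg : ∀ n < 0, w.coeff n ∈ I * I := by
    intro n hn
    rw [hweq, HahnSeries.coeff_sub, HahnSeries.coeff_neg, hqy n hn, neg_zero, zero_sub]
    exact (I * I).neg_mem (hGz n)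
  have hveq : v = qc.eval y + (qc.derivative.eval x - k₃ * z) * z := by
    rw [hvdef]
    linear_combination (-1 : LaurentSeries R) * hk₃
  have hqcy : ∀ n < 0, (qc.eval y).coeff n = 0 := by
    rw [hqcdef]; exact eval_mem_nonneg hyneg c
  have hvneg : ∀ n < 0, v.coeff n ∈ I := by
    intro n hn
    rw [hveq, HahnSeries.coeff_add, hqcy n hn, zero_add]
    exact coeff_mul_mem_left hzc n
  have hzw : z = v * w := by
    rw [hwdef, ← mul_assoc, huv, one_mul]
  intro n hn
  have hxz2 : x.coeff n = z.coeff n := by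
    rw [hzdef, HahnSeries.coeff_sub, hyneg n hn, sub_zero]
  rw [hxz2, hzw, HahnSeries.coeff_mul]
  apply Ideal.sum_mem
  intro ij hij
  rw [Finset.mem_addAntidiagonal] at hij
  rcases lt_or_ge ij.2 0 with h | h
  · exact Ideal.mul_mem_left _ _ (hwneg _ h)
  · have h1 : ij.1 < 0 := by
      have := hij.2.2
      omega
    exact Ideal.mul_mem_mul (hvneg _ h1) (hwI _)

end LaurentAux

namespace LaurentAux

variable {R : Type*} [CommRing R]

lemma coeff_neg_eq_zero (x : LaurentSeries R) (p c : R[X]) (hmo : p.Monic)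
    (h0 : aeval x p = 0) (hu : aeval x c * aeval x (derivative p) = 1) :
    ∀ n < 0, x.coeff n = 0 := by
  classical
  by_cases hx : x = 0
  · intro n _; simp [hx]
  set S : Set R := x.coeff '' Set.Ico x.order 0 with hS
  have hSfin : S.Finite := (Set.finite_Ico _ _).image _
  set I : Ideal R := Ideal.span S with hI
  have hmem : ∀ n < 0, x.coeff n ∈ I := by
    intro n hn
    by_cases h : x.coeff n = 0
    · rw [h]; exact I.zero_mem
    · exact Ideal.subset_span ⟨n, ⟨HahnSeries.order_le_of_coeff_ne_zero h, hn⟩, rfl⟩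
  have hIsq : I ≤ I * I := by
    rw [hI, Ideal.span_le]
    rintro s ⟨m, hm', rfl⟩
    exact coeff_mem_sq x p c h0 hu I hmem m hm'.2
  have hnil : I ≤ (0 : Ideal R).radical := by
    rw [hI, Ideal.span_le]
    rintro s ⟨m, hm', rfl⟩
    have : IsNilpotent (x.coeff m) := coeff_nilpotent x p hmo h0 m hm'.2
    exact mem_nilradical.mpr this
  have hFG : I.FG := ⟨hSfin.toFinset, by rw [hSfin.coe_toFinset]⟩
  obtain ⟨N, hN⟩ := Ideal.exists_pow_le_of_le_radical_of_fg hnil hFG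
  have hpow : ∀ m : ℕ, I ≤ I ^ (m + 1) := by
    intro m
    induction m with
    | zero => rw [pow_one]
    | succ m ih =>
      calc I ≤ I * I := hIsq
        _ ≤ I * I ^ (m + 1) := Ideal.mul_mono_right ih
        _ = I ^ (m + 2) := (pow_succ' I (m + 1)).symm
  have hbot : I ≤ ⊥ := by
    refine le_trans (hpow N) ?_
    rw [pow_succ]
    calc I ^ N * I ≤ I ^ N := Ideal.mul_le_left
      _ ≤ ⊥ := hN
  intro n hn
  have := hbot (hmem n hn)
  simpa using this

end LaurentAux

/-- If `k[G]` is a finite separable field extension of `k`, `R` is a commutative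
`k`-algebra, and `φ : k[G] → R((ϖ))` is a `k`-algebra homomorphism into the ring
of formal Laurent series, then the image of every `f ∈ k[G]` lies in the subring
of formal power series `R[[ϖ]]`. -/
theorem algHom_to_laurentSeries_mem_powerSeries {k kG R : Type*}
    [Field k] [Field kG] [Algebra k kG] [FiniteDimensional k kG]
    [Algebra.IsSeparable k kG] [CommRing R] [Algebra k R]
    (φ : kG →ₐ[k] LaurentSeries R) :
    ∀ f : kG, ∃ p : PowerSeries R, HahnSeries.ofPowerSeries ℤ R p = φ f := by
  intro f
  have hcomp : (algebraMap R (LaurentSeries R)).comp (algebraMap k R)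
      = algebraMap k (LaurentSeries R) := by
    ext r
    rw [RingHom.comp_apply, HahnSeries.algebraMap_apply' (Γ := ℤ),
      HahnSeries.algebraMap_apply' (Γ := ℤ)]
    congr 1
    simp [PowerSeries.algebraMap_apply]
  have haev : ∀ g : k[X],
      aeval (φ f) (g.map (algebraMap k R)) = aeval (φ f) g := by
    intro g
    rw [Polynomial.aeval_def, Polynomial.aeval_def, Polynomial.eval₂_map, hcomp]
  set x : LaurentSeries R := φ f with hx
  have hfi : IsIntegral k f := Algebra.IsIntegral.isIntegral f
  have hmono : (minpoly k f).Monic := minpoly.monic hfi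
  have hsep : (minpoly k f).Separable := Algebra.IsSeparable.isSeparable k f
  obtain ⟨a, b, hab⟩ := hsep
  have h0 : aeval x (minpoly k f) = 0 := by
    rw [hx, Polynomial.aeval_algHom_apply φ f, minpoly.aeval, map_zero]
  have hu : aeval x b * aeval x (derivative (minpoly k f)) = 1 := by
    have h := congrArg (aeval x) hab
    simp only [map_add, map_mul, map_one, h0, mul_zero, zero_add] at h
    exact h
  set p : R[X] := (minpoly k f).map (algebraMap k R) with hp
  set c : R[X] := b.map (algebraMap k R) with hc
  have h0' : aeval x p = 0 := by
    rw [hp, hx, haev]; exact h0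
  have hm' : p.Monic := hmono.map _
  have hu' : aeval x c * aeval x (derivative p) = 1 := by
    rw [hp, hc, Polynomial.derivative_map, hx, haev, haev]
    exact hu
  exact LaurentAux.exists_ofPowerSeries x (LaurentAux.coeff_neg_eq_zero x p c hm' h0' hu')
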